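/- Let F be a finitely generated free group with basis f₁,...,fₙ, let α : ℤ → Aut(F) be a homomorphism, and let G = F ⋊_α ℤ with ℤ = ⟨t⟩. If there exist a nonzero integer k and an element m ∈ F such that α(k) is the inner automorphism x ↦ m x m⁻¹, then the subgroup G_k of G generated by f₁,...,fₙ and t^k is isomorphic to F × ℤ and has finite index (at most k) in G. -/

import Mathlib

open SemidirectProduct

/-- The subgroup of `Fₙ ⋊[φ] ℤ` generated by the free basis `f₁, …, fₙ` of `Fₙ`
and by `t^k` (where `t` is the generator of `ℤ`). -/
noncomputable def Gk (n : ℕ) (φ : Multiplicative ℤ →* MulAut (FreeGroup (Fin n)))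
    (k : ℤ) : Subgroup (FreeGroup (Fin n) ⋊[φ] Multiplicative ℤ) :=
  Subgroup.closure
    ((Set.range fun i : Fin n =>
        (inl (FreeGroup.of i) : FreeGroup (Fin n) ⋊[φ] Multiplicative ℤ)) ∪
      {inr (Multiplicative.ofAdd k)})

section aux

variable {n : ℕ} {φ : Multiplicative ℤ →* MulAut (FreeGroup (Fin n))} {k : ℤ}

lemma inl_mem_Gk (f : FreeGroup (Fin n)) : inl f ∈ Gk n φ k := by
  induction f using FreeGroup.induction_on with
  | C1 => simpa using (Gk n φ k).one_mem
  | of i => exact Subgroup.subset_closure (Or.inl ⟨i, rfl⟩)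
  | inv_of i h => simpa using (Gk n φ k).inv_mem h
  | mul x y hx hy => simpa using (Gk n φ k).mul_mem hx hy

lemma inr_mem_Gk : (inr (Multiplicative.ofAdd k) :
    FreeGroup (Fin n) ⋊[φ] Multiplicative ℤ) ∈ Gk n φ k :=
  Subgroup.subset_closure (Or.inr rfl)

lemma Gk_eq_comap :
    Gk n φ k = (Subgroup.closure {Multiplicative.ofAdd k}).comap
      (rightHom : FreeGroup (Fin n) ⋊[φ] Multiplicative ℤ →* Multiplicative ℤ) := by
  apply le_antisymm
  · rw [Gk, Subgroup.closure_le]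
    rintro x (⟨i, rfl⟩ | rfl)
    · simp only [SetLike.mem_coe, Subgroup.mem_comap, rightHom_inl]
      exact (Subgroup.closure {Multiplicative.ofAdd k}).one_mem
    · simp only [SetLike.mem_coe, Subgroup.mem_comap, rightHom_inr]
      exact Subgroup.subset_closure rfl
  · intro g hg
    rw [Subgroup.mem_comap, ← Subgroup.zpowers_eq_closure, Subgroup.mem_zpowers_iff] at hg
    obtain ⟨l, hl⟩ := hg
    have : g = inl g.left * (inr (Multiplicative.ofAdd k) :
        FreeGroup (Fin n) ⋊[φ] Multiplicative ℤ) ^ l := by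
      rw [← map_zpow, hl]
      simp
    rw [this]
    exact (Gk n φ k).mul_mem (inl_mem_Gk _) ((Gk n φ k).zpow_mem inr_mem_Gk l)

end aux

/-- If `α(k)` is the inner automorphism `x ↦ m x m⁻¹` for some nonzero `k` and
`m ∈ Fₙ`, then the subgroup of `Fₙ ⋊_α ℤ` generated by `f₁, …, fₙ` and `t^k` is
isomorphic to `Fₙ × ℤ` and has finite index, at most `k`. -/
theorem stmt_8 (n : ℕ) (φ : Multiplicative ℤ →* MulAut (FreeGroup (Fin n)))
    (k : ℤ) (hk : k ≠ 0) (m : FreeGroup (Fin n))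
    (hm : φ (Multiplicative.ofAdd k) = MulAut.conj m) :
    Nonempty (Gk n φ k ≃* FreeGroup (Fin n) × Multiplicative ℤ) ∧
    0 < (Gk n φ k).index ∧ (Gk n φ k).index ≤ k.natAbs := by
  -- the element `m⁻¹ t^k`
  set c : FreeGroup (Fin n) ⋊[φ] Multiplicative ℤ :=
    inl m⁻¹ * inr (Multiplicative.ofAdd k) with hc
  have hcomm : ∀ f : FreeGroup (Fin n), Commute (inl f) c := by
    intro f
    have h1 : (inr (Multiplicative.ofAdd k) : FreeGroup (Fin n) ⋊[φ] Multiplicative ℤ)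
        * inl f = inl (m * f * m⁻¹) * inr (Multiplicative.ofAdd k) := by
      have := inl_aut (φ := φ) (Multiplicative.ofAdd k) f
      rw [hm] at this
      simp only [MulAut.conj_apply] at this
      rw [this, mul_assoc]
      simp [mul_assoc]
    show inl f * c = c * inl f
    rw [hc, ← mul_assoc, ← map_mul, mul_assoc, h1, ← mul_assoc, ← map_mul]
    congr 1
    group
  -- the homomorphism `F × ℤ → G`
  let ψ : FreeGroup (Fin n) × Multiplicative ℤ →* FreeGroup (Fin n) ⋊[φ] Multiplicative ℤ :=
    { toFun := fun p => inl p.1 * c ^ (Multiplicative.toAdd p.2)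
      map_one' := by simp
      map_mul' := by
        intro p q
        simp only [Prod.fst_mul, Prod.snd_mul, map_mul, toAdd_mul]
        rw [zpow_add]
        have := ((hcomm q.1).zpow_right (Multiplicative.toAdd p.2)).eq
        calc inl p.1 * inl q.1 * (c ^ Multiplicative.toAdd p.2 * c ^ Multiplicative.toAdd q.2)
            = inl p.1 * (inl q.1 * c ^ Multiplicative.toAdd p.2) * c ^ Multiplicative.toAdd q.2 := by
              group
          _ = inl p.1 * (c ^ Multiplicative.toAdd p.2 * inl q.1) * c ^ Multiplicative.toAdd q.2 := by
              rw [this]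
          _ = _ := by group }
  have hψ : ∀ p : FreeGroup (Fin n) × Multiplicative ℤ,
      ψ p = inl p.1 * c ^ (Multiplicative.toAdd p.2) := fun _ => rfl
  have hrc : rightHom c = Multiplicative.ofAdd k := by simp [hc]
  have hinj : Function.Injective ψ := by
    intro p q hpq
    have h2 : rightHom (ψ p) = rightHom (ψ q) := by rw [hpq]
    rw [hψ, hψ, map_mul, map_mul, map_zpow, map_zpow, hrc] at h2
    simp only [rightHom_inl, one_mul, ← ofAdd_zsmul, smul_eq_mul] at h2
    have h3 : Multiplicative.toAdd p.2 * k = Multiplicative.toAdd q.2 * k := by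
      exact_mod_cast Multiplicative.ofAdd.injective h2
    have h4 : p.2 = q.2 := by
      have := mul_right_cancel₀ hk h3
      exact Multiplicative.toAdd.injective this
    have h5 : p.1 = q.1 := by
      rw [hψ, hψ, h4] at hpq
      exact inl_injective (mul_right_cancel hpq)
    exact Prod.ext h5 h4
  have hrange : ψ.range = Gk n φ k := by
    apply le_antisymm
    · rintro x ⟨p, rfl⟩
      rw [hψ]
      refine (Gk n φ k).mul_mem (inl_mem_Gk _) ((Gk n φ k).zpow_mem ?_ _)
      exact (Gk n φ k).mul_mem (inl_mem_Gk _) inr_mem_Gk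
    · rw [Gk, Subgroup.closure_le]
      rintro x (⟨i, rfl⟩ | rfl)
      · exact ⟨(FreeGroup.of i, 1), by simp [hψ]⟩
      · refine ⟨(m, Multiplicative.ofAdd 1), ?_⟩
        rw [hψ]
        simp only [toAdd_ofAdd, zpow_one, hc]
        rw [← mul_assoc, ← map_mul]
        simp
  have hiso : Nonempty (Gk n φ k ≃* FreeGroup (Fin n) × Multiplicative ℤ) :=
    ⟨((MonoidHom.ofInjective hinj).trans (MulEquiv.subgroupCongr hrange)).symm⟩
  have hidx : (Gk n φ k).index = k.natAbs := by
    rw [Gk_eq_comap, Subgroup.index_comap_of_surjective _ rightHom_surjective]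
    have hcl : (Subgroup.closure {Multiplicative.ofAdd k} : Subgroup (Multiplicative ℤ)) =
        AddSubgroup.toSubgroup (AddSubgroup.zmultiples k) := by
      ext x
      rw [← Subgroup.zpowers_eq_closure, Subgroup.mem_zpowers_iff]
      constructor
      · rintro ⟨l, rfl⟩
        show Multiplicative.toAdd (Multiplicative.ofAdd k ^ l) ∈ AddSubgroup.zmultiples k
        refine AddSubgroup.mem_zmultiples_iff.mpr ⟨l, ?_⟩
        rw [← ofAdd_zsmul]
        simp [mul_comm]
      · intro hx
        obtain ⟨l, hl⟩ := AddSubgroup.mem_zmultiples_iff.mp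
          (show Multiplicative.toAdd x ∈ AddSubgroup.zmultiples k from hx)
        refine ⟨l, ?_⟩
        have : Multiplicative.ofAdd (l • k) = x := by rw [hl]; simp
        rw [← this, ofAdd_zsmul]
    rw [hcl, AddSubgroup.index_toSubgroup, Int.index_zmultiples]
  exact ⟨hiso, by omega, by omega⟩
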